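/- Over an algebraically closed field of characteristic p ≥ 3, the form f(v) = Σ_{i=1}^n v_i^{p+1} has Schmidt rank at least n/2, and its degree-2 Taylor component f^2(w,v) at any point w is identically zero. -/

import Mathlib

open MvPolynomial

/-- `f` is a sum of `r` products of forms of positive degrees summing to `d`. -/
def SRankLE {k : Type*} [Field k] {n : ℕ} (f : MvPolynomial (Fin n) k) (d r : ℕ) : Prop :=
  ∃ g h : Fin r → MvPolynomial (Fin n) k,
    (∀ i, ∃ a b : ℕ, 0 < a ∧ 0 < b ∧ a + b = d ∧
      (g i).IsHomogeneous a ∧ (h i).IsHomogeneous b) ∧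
    f = ∑ i, g i * h i

/-- The Schmidt rank of a form of degree `d`, as an extended natural number. -/
noncomputable def srank {k : Type*} [Field k] {n : ℕ}
    (f : MvPolynomial (Fin n) k) (d : ℕ) : ℕ∞ :=
  sInf {r : ℕ∞ | ∃ m : ℕ, r = m ∧ SRankLE f d m}


lemma Finsupp.degree_add' {σ : Type*} (a b : σ →₀ ℕ) :
    (a + b).degree = a.degree + b.degree := by
  have h := DFunLike.congr_fun (Finsupp.degree_eq_weight_one (σ := σ) (R := ℕ))
  rw [h a, h b, h (a + b), map_add]

lemma Finsupp.degree_single' {σ : Type*} (i : σ) (m : ℕ) :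
    (Finsupp.single i m).degree = m := by
  rcases eq_or_ne m 0 with rfl | hm
  · simp [Finsupp.degree]
  · rw [Finsupp.degree_apply, Finsupp.support_single_ne_zero _ hm, Finset.sum_singleton,
      Finsupp.single_eq_same]

lemma Finsupp.degree_eq_sum_univ {n : ℕ} (γ : Fin n →₀ ℕ) :
    γ.degree = ∑ i, γ i := by
  rw [Finsupp.degree_apply]
  exact Finset.sum_subset (Finset.subset_univ _) (fun i _ hi => Finsupp.notMem_support_iff.mp hi)

lemma prod_univ_X_pow {k : Type*} [Field k] {n : ℕ} (γ : Fin n →₀ ℕ) :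
    (∏ i, (X i : MvPolynomial (Fin n) k) ^ γ i) = monomial γ 1 := by
  rw [← prod_X_pow_eq_monomial]
  exact (Finset.prod_subset (Finset.subset_univ _)
    (fun i _ hi => by rw [Finsupp.notMem_support_iff.mp hi, pow_zero])).symm

lemma Finsupp.degree_eq_fsum {σ : Type*} (f : σ →₀ ℕ) :
    f.degree = f.sum fun _ e => e := rfl

lemma Finsupp.degree_eq_fsum' {σ : Type*} (f : σ →₀ ℕ) :
    f.degree = f.sum fun _ => id := rfl

lemma degree_sub_single {n : ℕ} (s : Fin n →₀ ℕ) (i : Fin n) (h : 1 ≤ s i) :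
    (s - Finsupp.single i 1).degree = s.degree - 1 := by
  have hadd : (s - Finsupp.single i 1) + Finsupp.single i 1 = s := by
    ext j
    rcases eq_or_ne i j with rfl | hij
    · simp only [Finsupp.add_apply, Finsupp.tsub_apply, Finsupp.single_eq_same]
      omega
    · simp [Finsupp.single_eq_of_ne' hij]
  have := congrArg Finsupp.degree hadd
  rw [Finsupp.degree_add', Finsupp.degree_single'] at this
  omega

lemma pderiv_isHomogeneous {k : Type*} [Field k] {n : ℕ} {g : MvPolynomial (Fin n) k} {m : ℕ}
    (hg : g.IsHomogeneous m) (i : Fin n) : (pderiv i g).IsHomogeneous (m - 1) := by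
  rw [g.as_sum, map_sum]
  rw [← mem_homogeneousSubmodule]
  apply Submodule.sum_mem
  intro s hs
  rw [pderiv_monomial, mem_homogeneousSubmodule]
  rcases Nat.eq_zero_or_pos (s i) with h0 | h1
  · rw [h0]
    simp only [Nat.cast_zero, mul_zero, map_zero]
    exact isHomogeneous_zero _ _ _
  · apply isHomogeneous_monomial
    have hdeg : s.degree = m := by
      by_contra hne
      exact (mem_support_iff.mp hs) (hg.coeff_eq_zero hne)
    rw [degree_sub_single s i h1, hdeg]

lemma span_count {k : Type*} [Field k] {p n r : ℕ} (hp : 3 ≤ p)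
    (g h : Fin r → MvPolynomial (Fin n) k) (a b : Fin r → ℕ)
    (ha : ∀ j, 0 < a j) (hb : ∀ j, 0 < b j) (hab : ∀ j, a j + b j = p + 1)
    (hga : ∀ j, (g j).IsHomogeneous (a j)) (hhb : ∀ j, (h j).IsHomogeneous (b j))
    (key : ∀ i : Fin n, (X i : MvPolynomial (Fin n) k) ^ p
        = ∑ j, (pderiv i (g j) * h j + g j * pderiv i (h j))) :
    n ≤ 2 * r := by
  classical
  by_contra hcon
  push_neg at hcon
  have hn : 1 ≤ n := by omega
  -- setup
  set F : Fin r ⊕ Fin r → MvPolynomial (Fin n) k := Sum.elim g h with hF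
  set Gen : (Fin r ⊕ Fin r → ℕ) → (Fin n → ℕ) → MvPolynomial (Fin n) k :=
    fun c e => (∏ t, F t ^ c t) * ∏ i, X i ^ e i with hGen
  set S : ℕ → Set (MvPolynomial (Fin n) k) := fun d =>
    {q | ∃ c e, ((∑ t, c t) + (∑ i, e i) ≤ d ∧ ∀ i, e i < p) ∧ q = Gen c e} with hS
  set W : ℕ → Submodule k (MvPolynomial (Fin n) k) := fun d => Submodule.span k (S d) with hW
  have Wmono : ∀ {d d' : ℕ}, d ≤ d' → W d ≤ W d' := by
    intro d d' hdd
    apply Submodule.span_mono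
    rintro q ⟨c, e, ⟨h1, h2⟩, rfl⟩
    exact ⟨c, e, ⟨h1.trans hdd, h2⟩, rfl⟩
  -- multiplication by a generator raises the index by one
  have hmul : ∀ (t₀ : Fin r ⊕ Fin r) (d : ℕ) (x : MvPolynomial (Fin n) k),
      x ∈ W d → F t₀ * x ∈ W (d + 1) := by
    intro t₀ d x hx
    have hle : W d ≤ (W (d + 1)).comap (LinearMap.mulLeft k (F t₀)) := by
      rw [hW, Submodule.span_le]
      rintro q ⟨c, e, ⟨h1, h2⟩, rfl⟩
      simp only [Set.mem_preimage, SetLike.mem_coe, Submodule.mem_comap,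
        LinearMap.mulLeft_apply]
      apply Submodule.subset_span
      refine ⟨Function.update c t₀ (c t₀ + 1), e, ⟨?_, h2⟩, ?_⟩
      · rw [Finset.sum_update_of_mem (Finset.mem_univ t₀)]
        have := Finset.add_sum_erase Finset.univ c (Finset.mem_univ t₀)
        rw [← Finset.erase_eq]
        omega
      · rw [hGen]
        simp only
        have hL := Finset.mul_prod_erase Finset.univ (fun t => F t ^ c t) (Finset.mem_univ t₀)
        have hR := Finset.mul_prod_erase Finset.univ
          (fun t => F t ^ Function.update c t₀ (c t₀ + 1) t) (Finset.mem_univ t₀)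
        have hcong : (∏ t ∈ Finset.univ.erase t₀, F t ^ Function.update c t₀ (c t₀ + 1) t)
            = ∏ t ∈ Finset.univ.erase t₀, F t ^ c t :=
          Finset.prod_congr rfl fun t ht => by
            rw [Function.update_of_ne (Finset.ne_of_mem_erase ht)]
        rw [← hL, ← hR, hcong]
        simp only [Function.update_self, pow_succ]
        ring
    exact hle hx
  -- every monomial of degree at most d lies in W d
  have claim : ∀ d (γ : Fin n →₀ ℕ), γ.degree ≤ d → (monomial γ (1 : k)) ∈ W d := by
    intro d
    induction d using Nat.strong_induction_on with
    | _ d IH =>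
      intro γ hγ
      have polymem : ∀ d' : ℕ, d' < d → ∀ q : MvPolynomial (Fin n) k,
          q.totalDegree ≤ d' → q ∈ W d' := by
        intro d' hd' q hq
        rw [q.as_sum]
        apply Submodule.sum_mem
        intro s hs
        have hmono : monomial s (coeff s q) = (coeff s q) • monomial s (1 : k) := by
          rw [smul_monomial, smul_eq_mul, mul_one]
        rw [hmono]
        apply Submodule.smul_mem
        apply IH d' hd'
        rw [Finsupp.degree_eq_fsum]
        exact le_trans (le_totalDegree hs) hq
      by_cases hcase : ∀ i, γ i < p
      · apply Submodule.subset_span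
        refine ⟨0, fun i => γ i, ⟨?_, hcase⟩, ?_⟩
        · simp only [Pi.zero_apply, Finset.sum_const_zero, zero_add]
          rw [← Finsupp.degree_eq_sum_univ]
          exact hγ
        · rw [hGen]
          simp only [Pi.zero_apply, pow_zero, Finset.prod_const_one, one_mul]
          exact (prod_univ_X_pow γ).symm
      · push_neg at hcase
        obtain ⟨i, hip⟩ := hcase
        have hpd : p ≤ γ.degree := le_trans hip (Finsupp.le_degree i γ)
        set β := γ - Finsupp.single i p with hβ
        have hγβ : Finsupp.single i p + β = γ := by
          rw [hβ]
          ext j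
          rcases eq_or_ne i j with rfl | hij
          · simp only [Finsupp.add_apply, Finsupp.tsub_apply, Finsupp.single_eq_same]
            omega
          · simp [Finsupp.single_eq_of_ne' hij]
        have hβdeg : β.degree = γ.degree - p := by
          have := congrArg Finsupp.degree hγβ
          rw [Finsupp.degree_add', Finsupp.degree_single'] at this
          omega
        have hmono : (monomial γ (1 : k)) = X i ^ p * monomial β 1 := by
          rw [X_pow_eq_monomial, monomial_mul, one_mul, hγβ]
        rw [hmono, key i, Finset.sum_mul]
        apply Submodule.sum_mem
        intro j _
        rw [add_mul]
        have hmonoβ : (monomial β (1 : k)).totalDegree ≤ γ.degree - p := by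
          refine le_trans (totalDegree_monomial_le _ _) ?_
          rw [← Finsupp.degree_eq_fsum', hβdeg]
        have hdd : p ≤ d := le_trans hpd hγ
        apply Submodule.add_mem
        · -- pderiv i (g j) * h j * monomial β 1
          have hcomm : pderiv i (g j) * h j * monomial β (1 : k)
              = F (Sum.inr j) * (pderiv i (g j) * monomial β 1) := by
            rw [hF]; simp only [Sum.elim_inr]; ring
          rw [hcomm]
          have hdeg : (pderiv i (g j) * monomial β (1 : k)).totalDegree ≤ d - b j := by
            refine le_trans (totalDegree_mul _ _) ?_
            have h2 : (pderiv i (g j)).totalDegree ≤ a j - 1 :=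
              (pderiv_isHomogeneous (hga j) i).totalDegree_le
            have := hab j; have := ha j; have := hb j
            omega
          have hlt : d - b j < d := by have := hb j; omega
          refine Wmono ?_ (hmul (Sum.inr j) _ _ (polymem _ hlt _ hdeg))
          have := hb j; omega
        · have hcomm : g j * pderiv i (h j) * monomial β (1 : k)
              = F (Sum.inl j) * (pderiv i (h j) * monomial β 1) := by
            rw [hF]; simp only [Sum.elim_inl]; ring
          rw [hcomm]
          have hdeg : (pderiv i (h j) * monomial β (1 : k)).totalDegree ≤ d - a j := by
            refine le_trans (totalDegree_mul _ _) ?_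
            have h2 : (pderiv i (h j)).totalDegree ≤ b j - 1 :=
              (pderiv_isHomogeneous (hhb j) i).totalDegree_le
            have := hab j; have := ha j; have := hb j
            omega
          have hlt : d - a j < d := by have := ha j; omega
          refine Wmono ?_ (hmul (Sum.inl j) _ _ (polymem _ hlt _ hdeg))
          have := ha j; omega
  -- the counting argument
  set q' : ℕ := n ^ (n - 1) * p ^ n with hq'
  set m : ℕ := n * q' with hm
  let ι := Fin n → Fin (q' + 1)
  let φ : ι → (Fin n →₀ ℕ) := fun c => Finsupp.equivFunOnFinite.symm (fun i => (c i : ℕ))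
  have hφinj : Function.Injective φ := by
    intro c c' hcc
    funext i
    have h0 : ((c i : ℕ)) = (c' i : ℕ) := by
      have := congrArg (fun f => f i) (congrArg Finsupp.equivFunOnFinite hcc)
      simpa [φ] using this
    exact Fin.ext h0
  have hv : LinearIndependent k (fun c : ι => (monomial (φ c) (1 : k))) := by
    have hb := (basisMonomials (Fin n) k).linearIndependent
    have h2 := hb.comp φ hφinj
    have h3 : ((basisMonomials (Fin n) k : (Fin n →₀ ℕ) → MvPolynomial (Fin n) k) ∘ φ)
        = fun c : ι => (monomial (φ c) (1 : k)) := by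
      funext c
      rw [coe_basisMonomials]
      rfl
    rwa [h3] at h2
  have hvmem : ∀ c : ι, (monomial (φ c) (1 : k)) ∈ W m := by
    intro c
    apply claim
    rw [Finsupp.degree_eq_sum_univ]
    have hle : ∀ i : Fin n, (φ c) i ≤ q' := by
      intro i
      have : (φ c) i = (c i : ℕ) := rfl
      rw [this]
      exact Nat.lt_succ_iff.mp (c i).isLt
    calc (∑ i, (φ c) i) ≤ ∑ _i : Fin n, q' := Finset.sum_le_sum fun i _ => hle i
    _ = n * q' := by rw [Finset.sum_const, Finset.card_univ, Fintype.card_fin, smul_eq_mul]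
  let T := (Fin r ⊕ Fin r → Fin (m + 1)) × (Fin n → Fin p)
  let ψ : T → MvPolynomial (Fin n) k :=
    fun ce => Gen (fun t => (ce.1 t : ℕ)) (fun i => (ce.2 i : ℕ))
  have hSsub : S m ⊆ Set.range ψ := by
    rintro x ⟨c, e, ⟨h1, h2⟩, rfl⟩
    have hct : ∀ t, c t < m + 1 := by
      intro t
      have := Finset.single_le_sum (f := c) (fun t _ => Nat.zero_le (c t)) (Finset.mem_univ t)
      omega
    exact ⟨⟨fun t => ⟨c t, hct t⟩, fun i => ⟨e i, h2 i⟩⟩, rfl⟩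
  -- cardinality chain
  let v' : ι → W m := fun c => ⟨monomial (φ c) (1 : k), hvmem c⟩
  have hv' : LinearIndependent k v' := by
    apply LinearIndependent.of_comp (W m).subtype
    exact hv
  have hrank1 := hv'.cardinal_lift_le_rank
  have hrank2 : Module.rank k (W m) ≤ Cardinal.mk (S m) := by
    rw [hW]
    exact rank_span_le (S m)
  have hrank3 : Cardinal.mk (S m) ≤ Cardinal.mk (Set.range ψ) :=
    Cardinal.mk_le_mk_of_subset hSsub
  have hrank4 : Cardinal.lift.{0} (Cardinal.mk (Set.range ψ))
      ≤ Cardinal.lift (Cardinal.mk T) := Cardinal.mk_range_le_lift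
  have hchain : Cardinal.lift (Cardinal.mk ι) ≤ Cardinal.lift (Cardinal.mk T) := by
    refine le_trans hrank1 (le_trans ?_ hrank4)
    exact Cardinal.lift_le.mpr (le_trans hrank2 hrank3)
  have hcard : Fintype.card ι ≤ Fintype.card T := by
    have := hchain
    rw [Cardinal.mk_fintype, Cardinal.mk_fintype, Cardinal.lift_natCast,
      Cardinal.lift_natCast, Nat.cast_le] at this
    exact this
  have hcι : Fintype.card ι = (q' + 1) ^ n := by
    simp [ι]
  have hcT : Fintype.card T = (m + 1) ^ (r + r) * p ^ n := by
    rw [show Fintype.card T = Fintype.card (Fin r ⊕ Fin r → Fin (m + 1))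
        * Fintype.card (Fin n → Fin p) from Fintype.card_prod _ _,
      Fintype.card_fun, Fintype.card_fun, Fintype.card_sum, Fintype.card_fin,
      Fintype.card_fin, Fintype.card_fin]
    rw [Fintype.card_fin]
  rw [hcι, hcT] at hcard
  -- numeric contradiction
  have e1 : m + 1 ≤ n * (q' + 1) := by
    have : n * (q' + 1) = n * q' + n := by ring
    omega
  have e2 : (m + 1) ^ (r + r) ≤ (n * (q' + 1)) ^ (r + r) := Nat.pow_le_pow_left e1 _
  have e3 : (n * (q' + 1)) ^ (r + r) ≤ (n * (q' + 1)) ^ (n - 1) := by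
    apply Nat.pow_le_pow_right
    · positivity
    · omega
  have e4 : (n * (q' + 1)) ^ (n - 1) * p ^ n = q' * (q' + 1) ^ (n - 1) := by
    rw [mul_pow, hq']
    ring
  have e5 : (q' + 1) ^ n = (q' + 1) ^ (n - 1) * (q' + 1) := by
    conv_lhs => rw [show n = (n - 1) + 1 by omega]
    rw [pow_succ]
  have e6 : (q' + 1) ^ (n - 1) * (q' + 1) ≤ (q' + 1) ^ (n - 1) * q' := by
    calc (q' + 1) ^ (n - 1) * (q' + 1) = (q' + 1) ^ n := e5.symm
    _ ≤ (m + 1) ^ (r + r) * p ^ n := hcard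
    _ ≤ (n * (q' + 1)) ^ (n - 1) * p ^ n := by
        exact Nat.mul_le_mul_right _ (le_trans e2 e3)
    _ = q' * (q' + 1) ^ (n - 1) := e4
    _ = (q' + 1) ^ (n - 1) * q' := by ring
  have e7 : q' + 1 ≤ q' := by
    have hpos : 0 < (q' + 1) ^ (n - 1) := by positivity
    exact Nat.le_of_mul_le_mul_left (by linarith [e6]) hpos
  omega


lemma pderiv_fermat {k : Type*} [Field k] {p : ℕ} [CharP k p] {n : ℕ} (i : Fin n) :
    pderiv i (∑ t : Fin n, (X t : MvPolynomial (Fin n) k) ^ (p + 1)) = X i ^ p := by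
  rw [map_sum]
  rw [Finset.sum_eq_single i]
  · rw [pderiv_pow, pderiv_X_self, mul_one, Nat.add_sub_cancel]
    have : ((p + 1 : ℕ) : MvPolynomial (Fin n) k) = 1 := by
      rw [← map_natCast (C : k →+* MvPolynomial (Fin n) k)]
      rw [Nat.cast_add, CharP.cast_eq_zero, Nat.cast_one, zero_add, map_one]
    rw [Nat.cast_add, Nat.cast_one] at this ⊢
    rw [this, one_mul]
  · intro t _ ht
    rw [pderiv_pow, pderiv_X_of_ne ht, mul_zero]
  · intro hi
    exact absurd (Finset.mem_univ i) hi


lemma taylor2_zero {k : Type*} [Field k] {p : ℕ} [CharP k p] (hp : 3 ≤ p) (n : ℕ) :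
    weightedHomogeneousComponent
        (Sum.elim (fun _ => 0) (fun _ => 1) : Fin n ⊕ Fin n → ℕ) 2
        (∑ i : Fin n,
          ((X (Sum.inl i) + X (Sum.inr i) : MvPolynomial (Fin n ⊕ Fin n) k) ^ (p + 1)))
      = 0 := by
  have hprime : p.Prime := by
    rcases CharP.char_is_prime_or_zero k p with h | h
    · exact h
    · omega
  have hpodd : ¬ (2 ∣ p) := by
    intro h2
    have := (Nat.prime_dvd_prime_iff_eq Nat.prime_two hprime).mp h2
    omega
  have hdvd : p ∣ (p + 1).choose 2 := by
    obtain ⟨s, hs⟩ : 2 ∣ p + 1 := by omega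
    rw [Nat.choose_two_right]
    have h3 : (p + 1) * (p + 1 - 1) = 2 * (s * p) := by
      have h4 : p + 1 - 1 = p := by omega
      rw [h4, hs]; ring
    rw [h3, Nat.mul_div_cancel_left _ (by norm_num)]
    exact ⟨s, by ring⟩
  have hcast : (((p + 1).choose 2 : ℕ) : k) = 0 :=
    (CharP.cast_eq_zero_iff k p _).mpr hdvd
  ext d
  rw [coeff_zero, coeff_weightedHomogeneousComponent]
  split_ifs with hd
  · rw [coeff_sum]
    apply Finset.sum_eq_zero
    intro i _
    rw [add_pow, coeff_sum]
    apply Finset.sum_eq_zero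
    intro j hj
    have hterm : (X (Sum.inl i) ^ j * X (Sum.inr i) ^ (p + 1 - j) *
          ((p + 1).choose j : MvPolynomial (Fin n ⊕ Fin n) k))
        = monomial (Finsupp.single (Sum.inl i) j + Finsupp.single (Sum.inr i) (p + 1 - j))
            (((p + 1).choose j : k)) := by
      rw [X_pow_eq_monomial, X_pow_eq_monomial, monomial_mul, ← map_natCast
        (C : k →+* MvPolynomial (Fin n ⊕ Fin n) k), C_apply, monomial_mul]
      simp
    rw [hterm, coeff_monomial]
    split_ifs with he
    · -- weight of d is 2, so p + 1 - j = 2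
      rw [← he] at hd
      rw [map_add] at hd
      have h1 : (Finsupp.weight (Sum.elim (fun _ => 0) (fun _ => 1) : Fin n ⊕ Fin n → ℕ))
          (Finsupp.single (Sum.inl i) j) = 0 := by
        rw [Finsupp.weight_apply, Finsupp.sum_single_index] <;> simp
      have h2 : (Finsupp.weight (Sum.elim (fun _ => 0) (fun _ => 1) : Fin n ⊕ Fin n → ℕ))
          (Finsupp.single (Sum.inr i) (p + 1 - j)) = p + 1 - j := by
        rw [Finsupp.weight_apply, Finsupp.sum_single_index] <;> simp
      rw [h1, h2, zero_add] at hd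
      have hj' : j = p - 1 := by
        have : j ≤ p + 1 := by
          simp only [Finset.mem_range] at hj; omega
        omega
      subst hj'
      have : (p + 1).choose (p - 1) = (p + 1).choose 2 := by
        have := Nat.choose_symm (n := p + 1) (k := 2) (by omega)
        simpa [show p + 1 - 2 = p - 1 by omega] using this
      rw [this, hcast]
    · rfl
  · rfl

lemma fermat_lower {k : Type*} [Field k] {p : ℕ} [CharP k p] (hp : 3 ≤ p) {n m : ℕ}
    (hle : SRankLE (∑ i : Fin n, (X i : MvPolynomial (Fin n) k) ^ (p + 1)) (p + 1) m) :
    n ≤ 2 * m := by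
  obtain ⟨g, h, hgh, hf⟩ := hle
  choose a b ha hb hab hga hhb using hgh
  apply span_count hp g h a b ha hb hab hga hhb
  intro i
  have h1 := congrArg (pderiv i) hf
  rw [pderiv_fermat i, map_sum] at h1
  rw [h1]
  exact Finset.sum_congr rfl fun j _ => pderiv_mul

/-- over an algebraically closed field of characteristic `p ≥ 3`, the form
`f(v) = ∑ᵢ vᵢ^(p+1)` has Schmidt rank at least `n/2` (stated as `n ≤ 2·rk f`), and the
degree-2 Taylor component `f²(w,v)` (the part of `f(w+v)` of degree 2 in `v`) vanishes
identically. -/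
theorem fermat_pPlusOne_rank_and_taylor {k : Type*} [Field k] [IsAlgClosed k]
    {p : ℕ} [CharP k p] (hp : 3 ≤ p) (n : ℕ) :
    (n : ℕ∞) ≤ 2 * srank (∑ i : Fin n, (X i : MvPolynomial (Fin n) k) ^ (p + 1)) (p + 1) ∧
    weightedHomogeneousComponent
        (Sum.elim (fun _ => 0) (fun _ => 1) : Fin n ⊕ Fin n → ℕ) 2
        (∑ i : Fin n,
          ((X (Sum.inl i) + X (Sum.inr i) : MvPolynomial (Fin n ⊕ Fin n) k) ^ (p + 1)))
      = 0 := by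
  constructor
  · rcases eq_or_ne (srank (∑ i : Fin n, (X i : MvPolynomial (Fin n) k) ^ (p + 1)) (p + 1)) ⊤
      with htop | hne
    · rw [htop]
      refine le_of_le_of_eq le_top ?_
      symm
      exact ENat.mul_top (by norm_num)
    · obtain ⟨m, hm⟩ := WithTop.ne_top_iff_exists.mp hne
      have hmm : ((m : ℕ∞)) < (m : ℕ∞) + 1 := by
        rw [← Nat.cast_one, ← Nat.cast_add]
        exact_mod_cast Nat.lt_succ_self m
      have hlt : srank (∑ i : Fin n, (X i : MvPolynomial (Fin n) k) ^ (p + 1)) (p + 1)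
          < (m : ℕ∞) + 1 := by
        rw [← hm]
        exact hmm
      rw [srank] at hlt
      obtain ⟨x, hxS, hx⟩ := sInf_lt_iff.mp hlt
      obtain ⟨m', hxm', hsr⟩ := hxS
      have hm'm : m' ≤ m := by
        rw [hxm', ← Nat.cast_one, ← Nat.cast_add, Nat.cast_lt] at hx
        omega
      have hnm : n ≤ 2 * m' := fermat_lower hp hsr
      rw [← hm]
      have h2 : n ≤ 2 * m := by omega
      calc (n : ℕ∞) ≤ ((2 * m : ℕ) : ℕ∞) := Nat.cast_le.mpr h2
      _ = 2 * (m : ℕ∞) := by push_cast; ring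
  · exact taylor2_zero hp n
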